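/- Fix n ∈ ℕ, ε > 0 and K ≥ 2^n·ε, and let (P, v) be the packing game of the instability construction with weights w. Then the allocation y : P → ℝ with y(r) = 1 and y(p_i^{(l)}) = y(q_i^{(l)}) = l·K for all l ∈ {1,…,n+2}, i ∈ {1,…,4}, is the nucleolus of (P, v): y(P) = v(P), and θ_v(z) ≤_lex θ_v(y) for every z : P → ℝ with z(P) = v(P). -/

import Mathlib

/-- The players of the instability construction: a root `r`, and players `p i (l)`,
`q i (l)` for levels `l ∈ {1, …, n+2}` (encoded by `Fin (n+2)`, level `= l.1 + 1`) and
`i ∈ {1, …, 4}`. -/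
inductive Player (n : ℕ) : Type where
  | r : Player n
  | p : Fin (n + 2) → Fin 4 → Player n
  | q : Fin (n + 2) → Fin 4 → Player n
  deriving DecidableEq, Fintype

/-- Index set for the family `𝒮` of the instability construction. -/
inductive Idx (n : ℕ) : Type where
  | root : Idx n
  | rootP : Fin 4 → Idx n
  | pair : Fin (n + 2) → Fin 4 → Idx n
  | quad : Fin (n + 1) → Fin 4 → Idx n
  deriving DecidableEq, Fintype

/-- The coalitions of the family `𝒮`: `{r}`; `{r, p_i^{(1)}}`; `{p_i^{(l)}, q_i^{(l)}}`;
and `{q_1^{(l)}, q_2^{(l)}, q_3^{(l)}, q_4^{(l)}, p_i^{(l+1)}}`. -/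
def coal {n : ℕ} : Idx n → Finset (Player n)
  | .root => {Player.r}
  | .rootP i => {Player.r, Player.p 0 i}
  | .pair l i => {Player.p l i, Player.q l i}
  | .quad l i => {Player.q l.castSucc 0, Player.q l.castSucc 1, Player.q l.castSucc 2,
      Player.q l.castSucc 3, Player.p l.succ i}

/-- The weights of the family `𝒮`: `rootW` on `{r}` (which is `1` for `w` and `1 − ε` for
`w̃`); `1` on `{r, p_i^{(1)}}`; `2·l·K` on `{p_i^{(l)}, q_i^{(l)}}`; and `4·l·K` on
`{q_1^{(l)}, …, q_4^{(l)}, p_i^{(l+1)}}`. -/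
noncomputable def wt {n : ℕ} (K rootW : ℝ) : Idx n → ℝ
  | .root => rootW
  | .rootP _ => 1
  | .pair l _ => 2 * ((l.1 : ℝ) + 1) * K
  | .quad l _ => 4 * ((l.1 : ℝ) + 1) * K

/-- The packing game of the instability construction: `packV n K rootW S` is the maximum
total weight of a packing of pairwise disjoint members of `𝒮` inside `S` (the empty
packing is allowed). -/
noncomputable def packV (n : ℕ) (K rootW : ℝ) (S : Finset (Player n)) : ℝ :=
  ((Finset.univ : Finset (Idx n)).powerset.filter (fun F =>
      (∀ j ∈ F, coal j ⊆ S) ∧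
      ∀ j ∈ F, ∀ j' ∈ F, j ≠ j' → Disjoint (coal j) (coal j'))).sup'
    ⟨∅, by simp⟩ (fun F => ∑ j ∈ F, wt K rootW j)

/-- The sorted (non-decreasing) list of excesses `y(S) − v(S)` over all coalitions
`S ⊆ P`. -/
noncomputable def excessList (n : ℕ) (v : Finset (Player n) → ℝ) (y : Player n → ℝ) :
    List ℝ :=
  ((Finset.univ : Finset (Player n)).powerset.val.map
    fun S => (∑ p ∈ S, y p) - v S).sort (· ≤ ·)

/-- Lexicographic order (`≤`) on lists of reals. -/
def lexLE (l₁ l₂ : List ℝ) : Prop := l₁ = l₂ ∨ List.Lex (· < ·) l₁ l₂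

private lemma countLex : ∀ (a : List ℝ) (b : List ℝ), a.Pairwise (· ≤ ·) → b.Pairwise (· ≤ ·) →
    a.length = b.length → ∀ t : ℝ,
    (∀ s : ℝ, s < t → (a.countP (fun x => decide (x ≤ s)) = b.countP (fun x => decide (x ≤ s)))) →
    (b.countP (fun x => decide (x ≤ t)) < a.countP (fun x => decide (x ≤ t))) →
    List.Lex (· < ·) a b := by
  intro a
  induction a with
  | nil => intro b _ _ _ t _ hst; simp at hst
  | cons x a ih =>
    intro b hsa hsb hlen t hcnt hstrict
    cases b with
    | nil => simp at hlen
    | cons w b =>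
      rcases lt_trichotomy x w with h | h | h
      · exact List.Lex.rel h
      · subst h
        apply List.Lex.cons
        apply ih b (List.pairwise_cons.mp hsa).2 (List.pairwise_cons.mp hsb).2
          (by simpa using hlen) t
        · intro s hs
          have := hcnt s hs
          simp only [List.countP_cons] at this
          omega
        · simp only [List.countP_cons] at hstrict
          omega
      · exfalso
        have hmem : ∀ v ∈ x :: a, x ≤ v := by
          intro v hv
          rcases List.mem_cons.mp hv with rfl | hv
          · exact le_refl v
          · exact (List.pairwise_cons.mp hsa).1 v hv
        rcases lt_or_ge w t with hwt | hwt
        · have h1 := hcnt w hwt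
          have h2 : (x :: a).countP (fun v => decide (v ≤ w)) = 0 := by
            rw [List.countP_eq_zero]
            intro v hv hvw
            have hxv : x ≤ v := hmem v hv
            simp only [decide_eq_true_eq] at hvw
            linarith
          have h3 : 0 < (w :: b).countP (fun v => decide (v ≤ w)) := by
            rw [List.countP_pos_iff]
            exact ⟨w, List.mem_cons_self, by simp⟩
          omega
        · have h2 : (x :: a).countP (fun v => decide (v ≤ t)) = 0 := by
            rw [List.countP_eq_zero]
            intro v hv hvt
            have hxv : x ≤ v := hmem v hv
            simp only [decide_eq_true_eq] at hvt
            linarith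
          omega

private lemma lexKey (C A B : Multiset ℝ) (hcard : A.card = B.card) (β : ℝ)
    (hwit : ∃ a ∈ A, a < β) (hB : ∀ b ∈ B, β ≤ b) :
    List.Lex (· < ·) ((C + A).sort (· ≤ ·)) ((C + B).sort (· ≤ ·)) := by
  obtain ⟨a0, ha0, ha0β⟩ := hwit
  have hne : A.toFinset.Nonempty := ⟨a0, Multiset.mem_toFinset.mpr ha0⟩
  set a := A.toFinset.min' hne with hadef
  have ha : a ∈ A := Multiset.mem_toFinset.mp (A.toFinset.min'_mem hne)
  have hmin : ∀ x ∈ A, a ≤ x := fun x hx => A.toFinset.min'_le x (Multiset.mem_toFinset.mpr hx)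
  have haβ : a < β := lt_of_le_of_lt (hmin a0 ha0) ha0β
  have key : ∀ (M : Multiset ℝ) (s : ℝ),
      (M.sort (· ≤ ·)).countP (fun x => decide (x ≤ s)) = M.countP (fun x => x ≤ s) := by
    intro M s
    have := Multiset.coe_countP (fun x : ℝ => x ≤ s) (M.sort (· ≤ ·))
    rw [Multiset.sort_eq] at this
    exact this.symm
  apply countLex _ _ (Multiset.pairwise_sort _ _) (Multiset.pairwise_sort _ _)
    (by simp [Multiset.length_sort, hcard]) a
  · intro s hs
    rw [key, key, Multiset.countP_add, Multiset.countP_add]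
    have hA : A.countP (fun x => x ≤ s) = 0 :=
      Multiset.countP_eq_zero.mpr (fun v hv hvs => absurd (le_trans (hmin v hv) hvs) (not_le.mpr hs))
    have hBz : B.countP (fun x => x ≤ s) = 0 :=
      Multiset.countP_eq_zero.mpr (fun v hv hvs => by
        have := hB v hv; linarith)
    rw [hA, hBz]
  · rw [key, key, Multiset.countP_add, Multiset.countP_add]
    have hA : 0 < A.countP (fun x => x ≤ a) :=
      Multiset.countP_pos.mpr ⟨a, ha, le_refl a⟩
    have hBz : B.countP (fun x => x ≤ a) = 0 :=
      Multiset.countP_eq_zero.mpr (fun v hv hvs => by have := hB v hv; linarith)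
    omega

set_option linter.unusedVariables false in
private def pe (n : ℕ) : (Unit ⊕ (Fin (n+2) × Fin 4) ⊕ (Fin (n+2) × Fin 4)) ≃ Player n where
  toFun x := match x with
    | .inl _ => .r
    | .inr (.inl (l,i)) => .p l i
    | .inr (.inr (l,i)) => .q l i
  invFun x := match x with
    | .r => .inl ()
    | .p l i => .inr (.inl (l,i))
    | .q l i => .inr (.inr (l,i))
  left_inv := by rintro (⟨⟩ | ⟨l,i⟩ | ⟨l,i⟩) <;> rfl
  right_inv := by rintro (_|⟨l,i⟩|⟨l,i⟩) <;> rfl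

private lemma sum_player {n : ℕ} (f : Player n → ℝ) :
    ∑ x, f x = f .r + ((∑ v : Fin (n+2) × Fin 4, f (.p v.1 v.2)) +
      ∑ v : Fin (n+2) × Fin 4, f (.q v.1 v.2)) := by
  rw [← Equiv.sum_comp (pe n) f, Fintype.sum_sum_type, Fintype.sum_sum_type]
  simp [pe]

private lemma coal_sub_r {n : ℕ} (j : Idx n) (h : coal j ⊆ {Player.r}) : j = .root := by
  cases j with
  | root => rfl
  | rootP i => have := h (show Player.p 0 i ∈ coal (.rootP i) by simp [coal]); simp at this
  | pair l i => have := h (show Player.p l i ∈ coal (.pair l i) by simp [coal]); simp at this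
  | quad l i => have := h (show Player.p l.succ i ∈ coal (.quad l i) by simp [coal]); simp at this

private lemma coal_sub_pair {n : ℕ} (j : Idx n) (l : Fin (n+2)) (i : Fin 4)
    (h : coal j ⊆ {Player.p l i, Player.q l i}) : j = .pair l i := by
  cases j with
  | root => have := h (show Player.r ∈ coal (.root) by simp [coal]); simp at this
  | rootP i' => have := h (show Player.r ∈ coal (.rootP i') by simp [coal]); simp at this
  | pair l' i' =>
    have := h (show Player.p l' i' ∈ coal (.pair l' i') by simp [coal])
    simp only [Finset.mem_insert, Finset.mem_singleton, Player.p.injEq] at this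
    rcases this with ⟨rfl, rfl⟩ | h2
    · rfl
    · exact absurd h2 (by simp)
  | quad l' i' =>
    have h0 := h (show Player.q l'.castSucc 0 ∈ coal (.quad l' i') by simp [coal])
    have h1 := h (show Player.q l'.castSucc 1 ∈ coal (.quad l' i') by simp [coal])
    simp only [Finset.mem_insert, Finset.mem_singleton, Player.q.injEq] at h0 h1
    rcases h0 with h0 | ⟨he0, hi0⟩
    · exact absurd h0 (by simp)
    rcases h1 with h1 | ⟨he1, hi1⟩
    · exact absurd h1 (by simp)
    rw [← hi0] at hi1
    exact absurd hi1 (by decide)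

private lemma coal_sub_single_p {n : ℕ} (j : Idx n) (l : Fin (n+2)) (i : Fin 4)
    (h : coal j ⊆ {Player.p l i}) : False := by
  cases j with
  | root => have := h (show Player.r ∈ coal (.root) by simp [coal]); simp at this
  | rootP i' => have := h (show Player.r ∈ coal (.rootP i') by simp [coal]); simp at this
  | pair l' i' => have := h (show Player.q l' i' ∈ coal (.pair l' i') by simp [coal]); simp at this
  | quad l' i' => have := h (show Player.q l'.castSucc 0 ∈ coal (.quad l' i') by simp [coal]); simp at this

private lemma coal_sub_single_q {n : ℕ} (j : Idx n) (l : Fin (n+2)) (i : Fin 4)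
    (h : coal j ⊆ {Player.q l i}) : False := by
  cases j with
  | root => have := h (show Player.r ∈ coal (.root) by simp [coal]); simp at this
  | rootP i' => have := h (show Player.r ∈ coal (.rootP i') by simp [coal]); simp at this
  | pair l' i' => have := h (show Player.p l' i' ∈ coal (.pair l' i') by simp [coal]); simp at this
  | quad l' i' =>
    have h0 := h (show Player.q l'.castSucc 0 ∈ coal (.quad l' i') by simp [coal])
    have h1 := h (show Player.q l'.castSucc 1 ∈ coal (.quad l' i') by simp [coal])
    simp only [Finset.mem_singleton, Player.q.injEq] at h0 h1
    rw [← h0.2] at h1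
    exact absurd h1.2 (by decide)

private lemma mem_pack {n : ℕ} {S : Finset (Player n)} {F : Finset (Idx n)} :
    F ∈ ((Finset.univ : Finset (Idx n)).powerset.filter (fun F =>
      (∀ j ∈ F, coal j ⊆ S) ∧
      ∀ j ∈ F, ∀ j' ∈ F, j ≠ j' → Disjoint (coal j) (coal j'))) ↔
    (∀ j ∈ F, coal j ⊆ S) ∧
      ∀ j ∈ F, ∀ j' ∈ F, j ≠ j' → Disjoint (coal j) (coal j') := by
  simp [Finset.mem_filter]

private lemma packV_le_of {n : ℕ} {K : ℝ} {S : Finset (Player n)} {c : ℝ}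
    (h : ∀ F : Finset (Idx n), (∀ j ∈ F, coal j ⊆ S) →
      (∀ j ∈ F, ∀ j' ∈ F, j ≠ j' → Disjoint (coal j) (coal j')) →
      ∑ j ∈ F, wt K 1 j ≤ c) :
    packV n K 1 S ≤ c := by
  apply Finset.sup'_le
  intro F hF
  rw [mem_pack] at hF
  exact h F hF.1 hF.2

private lemma packV_ge {n : ℕ} {K : ℝ} {S : Finset (Player n)} {F : Finset (Idx n)}
    (h1 : ∀ j ∈ F, coal j ⊆ S)
    (h2 : ∀ j ∈ F, ∀ j' ∈ F, j ≠ j' → Disjoint (coal j) (coal j')) :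
    ∑ j ∈ F, wt K 1 j ≤ packV n K 1 S := by
  unfold packV
  exact Finset.le_sup' (fun F => ∑ j ∈ F, wt K 1 j) (mem_pack.mpr ⟨h1, h2⟩)

private lemma v_r {n : ℕ} {K : ℝ} : packV n K 1 {Player.r} = 1 := by
  apply le_antisymm
  · apply packV_le_of
    intro F h1 _
    have hF : F ⊆ {Idx.root} := fun j hj => Finset.mem_singleton.mpr (coal_sub_r j (h1 j hj))
    rcases Finset.subset_singleton_iff.mp hF with rfl | rfl
    · simp
    · simp [wt]
  · have := packV_ge (K := K) (F := {Idx.root}) (S := ({Player.r} : Finset (Player n)))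
      (by intro j hj; rw [Finset.mem_singleton] at hj; subst hj; simp [coal])
      (by intro j hj j' hj' hne; rw [Finset.mem_singleton] at hj hj'; subst hj; subst hj'; simp at hne)
    simpa [wt] using this

private lemma v_pair {n : ℕ} {K : ℝ} (hK0 : 0 < K) (l : Fin (n+2)) (i : Fin 4) :
    packV n K 1 {Player.p l i, Player.q l i} = 2 * ((l.1:ℝ)+1) * K := by
  apply le_antisymm
  · apply packV_le_of
    intro F h1 _
    have hF : F ⊆ {Idx.pair l i} := fun j hj => Finset.mem_singleton.mpr (coal_sub_pair j l i (h1 j hj))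
    rcases Finset.subset_singleton_iff.mp hF with rfl | rfl
    · simp; positivity
    · simp [wt]
  · have := packV_ge (K := K) (F := {Idx.pair l i}) (S := ({Player.p l i, Player.q l i} : Finset (Player n)))
      (by intro j hj; rw [Finset.mem_singleton] at hj; subst hj; simp [coal])
      (by intro j hj j' hj' hne; rw [Finset.mem_singleton] at hj hj'; subst hj; subst hj'; simp at hne)
    simpa [wt] using this

private lemma v_single_p {n : ℕ} {K : ℝ} (l : Fin (n+2)) (i : Fin 4) :
    packV n K 1 {Player.p l i} = 0 := by
  apply le_antisymm
  · apply packV_le_of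
    intro F h1 _
    have hF : F = ∅ := by
      rw [Finset.eq_empty_iff_forall_notMem]
      exact fun j hj => coal_sub_single_p j l i (h1 j hj)
    simp [hF]
  · have := packV_ge (K := K) (F := (∅ : Finset (Idx n))) (S := ({Player.p l i} : Finset (Player n)))
      (by simp) (by simp)
    simpa using this

private lemma v_single_q {n : ℕ} {K : ℝ} (l : Fin (n+2)) (i : Fin 4) :
    packV n K 1 {Player.q l i} = 0 := by
  apply le_antisymm
  · apply packV_le_of
    intro F h1 _
    have hF : F = ∅ := by
      rw [Finset.eq_empty_iff_forall_notMem]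
      exact fun j hj => coal_sub_single_q j l i (h1 j hj)
    simp [hF]
  · have := packV_ge (K := K) (F := (∅ : Finset (Idx n))) (S := ({Player.q l i} : Finset (Player n)))
      (by simp) (by simp)
    simpa using this

section YPart
variable {n : ℕ} {K : ℝ}

private lemma y_nonneg (hK0 : 0 < K) (y : Player n → ℝ)
    (hyr : y Player.r = 1)
    (hyp : ∀ (l : Fin (n + 2)) (i : Fin 4), y (Player.p l i) = ((l.1 : ℝ) + 1) * K)
    (hyq : ∀ (l : Fin (n + 2)) (i : Fin 4), y (Player.q l i) = ((l.1 : ℝ) + 1) * K) :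
    ∀ x : Player n, 0 ≤ y x := by
  intro x
  cases x with
  | r => rw [hyr]; norm_num
  | p l i => rw [hyp]; positivity
  | q l i => rw [hyq]; positivity

private lemma ycoal_quad (y : Player n → ℝ)
    (hyp : ∀ (l : Fin (n + 2)) (i : Fin 4), y (Player.p l i) = ((l.1 : ℝ) + 1) * K)
    (hyq : ∀ (l : Fin (n + 2)) (i : Fin 4), y (Player.q l i) = ((l.1 : ℝ) + 1) * K)
    (l : Fin (n+1)) (i : Fin 4) :
    ∑ x ∈ coal (Idx.quad l i : Idx n), y x = 4 * ((l.1:ℝ)+1) * K + (((l.1:ℝ)+1)+1) * K := by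
  rw [coal]
  rw [Finset.sum_insert (by simp), Finset.sum_insert (by simp),
    Finset.sum_insert (by simp), Finset.sum_pair (by simp)]
  rw [hyq, hyq, hyq, hyq, hyp]
  simp [Fin.val_succ]
  ring

private lemma wt_le_ycoal (hK0 : 0 < K) (y : Player n → ℝ)
    (hyr : y Player.r = 1)
    (hyp : ∀ (l : Fin (n + 2)) (i : Fin 4), y (Player.p l i) = ((l.1 : ℝ) + 1) * K)
    (hyq : ∀ (l : Fin (n + 2)) (i : Fin 4), y (Player.q l i) = ((l.1 : ℝ) + 1) * K)
    (j : Idx n) : wt K 1 j ≤ ∑ x ∈ coal j, y x := by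
  cases j with
  | root => simp [coal, hyr, wt]
  | rootP i =>
    rw [coal, Finset.sum_pair (by simp), hyr, hyp, wt]
    have : 0 ≤ ((0:ℝ)+1) * K := by positivity
    simp only [Fin.val_zero, Nat.cast_zero] at *
    linarith
  | pair l i =>
    rw [coal, Finset.sum_pair (by simp), hyp, hyq, wt]
    exact le_of_eq (by ring)
  | quad l i =>
    rw [ycoal_quad y hyp hyq l i, wt]
    have : 0 ≤ (((l.1:ℝ)+1)+1) * K := by positivity
    linarith

private lemma sum_ycoal_eq (y : Player n → ℝ) {F : Finset (Idx n)}
    (h2 : ∀ j ∈ F, ∀ j' ∈ F, j ≠ j' → Disjoint (coal j) (coal j')) :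
    ∑ j ∈ F, ∑ x ∈ coal j, y x = ∑ x ∈ F.biUnion coal, y x :=
  (Finset.sum_biUnion (fun a ha b hb hab => h2 a ha b hb hab)).symm

private lemma pack_sum_le (hK0 : 0 < K) (y : Player n → ℝ)
    (hyr : y Player.r = 1)
    (hyp : ∀ (l : Fin (n + 2)) (i : Fin 4), y (Player.p l i) = ((l.1 : ℝ) + 1) * K)
    (hyq : ∀ (l : Fin (n + 2)) (i : Fin 4), y (Player.q l i) = ((l.1 : ℝ) + 1) * K)
    {S : Finset (Player n)} {F : Finset (Idx n)}
    (h1 : ∀ j ∈ F, coal j ⊆ S)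
    (h2 : ∀ j ∈ F, ∀ j' ∈ F, j ≠ j' → Disjoint (coal j) (coal j')) :
    ∑ j ∈ F, wt K 1 j ≤ ∑ x ∈ S, y x := by
  calc ∑ j ∈ F, wt K 1 j ≤ ∑ j ∈ F, ∑ x ∈ coal j, y x :=
        Finset.sum_le_sum (fun j _ => wt_le_ycoal hK0 y hyr hyp hyq j)
    _ = ∑ x ∈ F.biUnion coal, y x := sum_ycoal_eq y h2
    _ ≤ ∑ x ∈ S, y x := Finset.sum_le_sum_of_subset_of_nonneg
        (Finset.biUnion_subset.mpr h1)
        (fun x _ _ => y_nonneg hK0 y hyr hyp hyq x)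

private lemma v_le_y (hK0 : 0 < K) (y : Player n → ℝ)
    (hyr : y Player.r = 1)
    (hyp : ∀ (l : Fin (n + 2)) (i : Fin 4), y (Player.p l i) = ((l.1 : ℝ) + 1) * K)
    (hyq : ∀ (l : Fin (n + 2)) (i : Fin 4), y (Player.q l i) = ((l.1 : ℝ) + 1) * K)
    (S : Finset (Player n)) : packV n K 1 S ≤ ∑ x ∈ S, y x :=
  packV_le_of (fun _ h1 h2 => pack_sum_le hK0 y hyr hyp hyq h1 h2)

private lemma disj_pair_pair (l l' : Fin (n+2)) (i i' : Fin 4) (h : ¬(l = l' ∧ i = i')) :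
    Disjoint (coal (.pair l i) : Finset (Player n)) (coal (.pair l' i')) := by
  rw [Finset.disjoint_left]
  intro x hx hx'
  simp only [coal, Finset.mem_insert, Finset.mem_singleton] at hx hx'
  rcases hx with rfl | rfl
  · rcases hx' with h' | h'
    · exact h (by simpa using h')
    · simp at h'
  · rcases hx' with h' | h'
    · simp at h'
    · exact h (by simpa using h')

private lemma v_univ (hK0 : 0 < K) (y : Player n → ℝ)
    (hyr : y Player.r = 1)
    (hyp : ∀ (l : Fin (n + 2)) (i : Fin 4), y (Player.p l i) = ((l.1 : ℝ) + 1) * K)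
    (hyq : ∀ (l : Fin (n + 2)) (i : Fin 4), y (Player.q l i) = ((l.1 : ℝ) + 1) * K) :
    packV n K 1 (Finset.univ : Finset (Player n)) = ∑ x, y x := by
  apply le_antisymm (v_le_y hK0 y hyr hyp hyq _)
  set F0 : Finset (Idx n) :=
    insert Idx.root ((Finset.univ : Finset (Fin (n+2) × Fin 4)).image fun v => Idx.pair v.1 v.2)
    with hF0
  have hroot : (Idx.root : Idx n) ∉
      ((Finset.univ : Finset (Fin (n+2) × Fin 4)).image fun v => Idx.pair v.1 v.2) := by
    simp
  have hsum : ∑ j ∈ F0, wt K 1 j = ∑ x, y x := by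
    rw [hF0, Finset.sum_insert hroot, Finset.sum_image (by intro a _ b _ hab; simpa [Prod.ext_iff] using hab)]
    rw [sum_player y, hyr]
    have : ∀ v : Fin (n+2) × Fin 4, wt K 1 (Idx.pair v.1 v.2 : Idx n)
        = y (Player.p v.1 v.2) + y (Player.q v.1 v.2) := by
      intro v; rw [wt, hyp, hyq]; ring
    rw [Finset.sum_congr rfl (fun v _ => this v), Finset.sum_add_distrib, wt]
  rw [← hsum]
  apply packV_ge (K := K)
  · intro j _; exact Finset.subset_univ _
  · intro j hj j' hj' hne
    rw [hF0, Finset.mem_insert] at hj hj'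
    rcases hj with rfl | hj <;> rcases hj' with rfl | hj'
    · exact absurd rfl hne
    · simp only [Finset.mem_image] at hj'
      obtain ⟨v, _, rfl⟩ := hj'
      rw [Finset.disjoint_left]
      intro x hx hx'
      simp only [coal, Finset.mem_singleton, Finset.mem_insert] at hx hx'
      subst hx
      rcases hx' with h' | h' <;> exact absurd h' (by simp)
    · simp only [Finset.mem_image] at hj
      obtain ⟨v, _, rfl⟩ := hj
      rw [Finset.disjoint_left]
      intro x hx hx'
      simp only [coal, Finset.mem_singleton, Finset.mem_insert] at hx hx'
      rcases hx with rfl | rfl <;> simp at hx'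
    · simp only [Finset.mem_image] at hj hj'
      obtain ⟨v, _, rfl⟩ := hj
      obtain ⟨v', _, rfl⟩ := hj'
      apply disj_pair_pair
      intro ⟨h1, h2⟩
      exact hne (by rw [h1, h2])

end YPart

section C1
variable {n : ℕ} {K : ℝ}

private lemma pack_leftover (hK0 : 0 < K) (y : Player n → ℝ)
    (hyr : y Player.r = 1)
    (hyp : ∀ (l : Fin (n + 2)) (i : Fin 4), y (Player.p l i) = ((l.1 : ℝ) + 1) * K)
    (hyq : ∀ (l : Fin (n + 2)) (i : Fin 4), y (Player.q l i) = ((l.1 : ℝ) + 1) * K)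
    {S : Finset (Player n)} {F : Finset (Idx n)} (x : Player n) (c : ℝ)
    (h1 : ∀ j ∈ F, coal j ⊆ S)
    (h2 : ∀ j ∈ F, ∀ j' ∈ F, j ≠ j' → Disjoint (coal j) (coal j'))
    (hxS : x ∈ S) (hyx : c ≤ y x)
    (hkey : ∀ j ∈ F, x ∈ coal j → wt K 1 j + c ≤ ∑ v ∈ coal j, y v) :
    ∑ j ∈ F, wt K 1 j ≤ (∑ v ∈ S, y v) - c := by
  have hble : ∑ v ∈ F.biUnion coal, y v ≤ ∑ v ∈ S, y v :=
    Finset.sum_le_sum_of_subset_of_nonneg (Finset.biUnion_subset.mpr h1)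
      (fun v _ _ => y_nonneg hK0 y hyr hyp hyq v)
  have e4 : ∑ j ∈ F, ∑ v ∈ coal j, y v = ∑ v ∈ F.biUnion coal, y v := sum_ycoal_eq y h2
  by_cases hcov : ∃ j ∈ F, x ∈ coal j
  · obtain ⟨j0, hj0, hxj0⟩ := hcov
    have e1 : wt K 1 j0 + ∑ j ∈ F.erase j0, wt K 1 j = ∑ j ∈ F, wt K 1 j :=
      Finset.add_sum_erase _ _ hj0
    have e2 : ∑ j ∈ F.erase j0, wt K 1 j ≤ ∑ j ∈ F.erase j0, ∑ v ∈ coal j, y v :=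
      Finset.sum_le_sum (fun j _ => wt_le_ycoal hK0 y hyr hyp hyq j)
    have e3 : (∑ v ∈ coal j0, y v) + ∑ j ∈ F.erase j0, ∑ v ∈ coal j, y v
        = ∑ j ∈ F, ∑ v ∈ coal j, y v :=
      Finset.add_sum_erase F (fun j => ∑ v ∈ coal j, y v) hj0
    have e5 := hkey j0 hj0 hxj0
    linarith
  · push_neg at hcov
    have hnb : x ∉ F.biUnion coal := by
      rw [Finset.mem_biUnion]
      rintro ⟨j, hj, hx⟩
      exact hcov j hj hx
    have e6 : ∑ v ∈ insert x (F.biUnion coal), y v = y x + ∑ v ∈ F.biUnion coal, y v :=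
      Finset.sum_insert hnb
    have e7 : ∑ v ∈ insert x (F.biUnion coal), y v ≤ ∑ v ∈ S, y v :=
      Finset.sum_le_sum_of_subset_of_nonneg
        (Finset.insert_subset hxS (Finset.biUnion_subset.mpr h1))
        (fun v _ _ => y_nonneg hK0 y hyr hyp hyq v)
    have e2 : ∑ j ∈ F, wt K 1 j ≤ ∑ j ∈ F, ∑ v ∈ coal j, y v :=
      Finset.sum_le_sum (fun j _ => wt_le_ycoal hK0 y hyr hyp hyq j)
    linarith

private lemma excess_ge_p (hK0 : 0 < K) (y : Player n → ℝ)
    (hyr : y Player.r = 1)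
    (hyp : ∀ (l : Fin (n + 2)) (i : Fin 4), y (Player.p l i) = ((l.1 : ℝ) + 1) * K)
    (hyq : ∀ (l : Fin (n + 2)) (i : Fin 4), y (Player.q l i) = ((l.1 : ℝ) + 1) * K)
    {S : Finset (Player n)} (l' : Fin (n+2)) (i : Fin 4)
    (hx : Player.p l' i ∈ S) (hnx : Player.q l' i ∉ S) :
    packV n K 1 S ≤ (∑ v ∈ S, y v) - ((l'.1:ℝ)+1) * K := by
  apply packV_le_of
  intro F h1 h2
  apply pack_leftover hK0 y hyr hyp hyq (Player.p l' i) _ h1 h2 hx (le_of_eq (hyp l' i).symm)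
  intro j hj hxj
  cases j with
  | root => simp [coal] at hxj
  | rootP i'' =>
    simp only [coal, Finset.mem_insert, Finset.mem_singleton, Player.p.injEq] at hxj
    rcases hxj with h' | ⟨rfl, rfl⟩
    · exact absurd h' (by simp)
    · rw [coal, Finset.sum_pair (by simp), hyr, hyp, wt]
  | pair l'' i'' =>
    simp only [coal, Finset.mem_insert, Finset.mem_singleton, Player.p.injEq] at hxj
    rcases hxj with ⟨rfl, rfl⟩ | h'
    · exact absurd (h1 _ hj (show Player.q l' i ∈ coal (.pair l' i) by simp [coal])) hnx
    · exact absurd h' (by simp)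
  | quad lq iq =>
    simp only [coal, Finset.mem_insert, Finset.mem_singleton, Player.p.injEq] at hxj
    rcases hxj with h' | h' | h' | h' | ⟨rfl, rfl⟩
    · exact absurd h' (by simp)
    · exact absurd h' (by simp)
    · exact absurd h' (by simp)
    · exact absurd h' (by simp)
    · rw [ycoal_quad y hyp hyq, wt, Fin.val_succ]
      push_cast
      ring_nf
      exact le_of_eq (by ring)

private lemma excess_ge_q (hK0 : 0 < K) (y : Player n → ℝ)
    (hyr : y Player.r = 1)
    (hyp : ∀ (l : Fin (n + 2)) (i : Fin 4), y (Player.p l i) = ((l.1 : ℝ) + 1) * K)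
    (hyq : ∀ (l : Fin (n + 2)) (i : Fin 4), y (Player.q l i) = ((l.1 : ℝ) + 1) * K)
    {S : Finset (Player n)} (l' : Fin (n+2)) (i : Fin 4)
    (hx : Player.q l' i ∈ S) (hnx : Player.p l' i ∉ S) :
    packV n K 1 S ≤ (∑ v ∈ S, y v) - ((l'.1:ℝ)+1) * K := by
  apply packV_le_of
  intro F h1 h2
  apply pack_leftover hK0 y hyr hyp hyq (Player.q l' i) _ h1 h2 hx (le_of_eq (hyq l' i).symm)
  intro j hj hxj
  cases j with
  | root => simp [coal] at hxj
  | rootP i'' => simp [coal] at hxj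
  | pair l'' i'' =>
    simp only [coal, Finset.mem_insert, Finset.mem_singleton, Player.q.injEq] at hxj
    rcases hxj with h' | ⟨rfl, rfl⟩
    · exact absurd h' (by simp)
    · exact absurd (h1 _ hj (show Player.p l' i ∈ coal (.pair l' i) by simp [coal])) hnx
  | quad lq iq =>
    have hl' : l' = lq.castSucc := by
      simp only [coal, Finset.mem_insert, Finset.mem_singleton, Player.q.injEq] at hxj
      rcases hxj with ⟨rfl, _⟩ | ⟨rfl, _⟩ | ⟨rfl, _⟩ | ⟨rfl, _⟩ | h'
      · rfl
      · rfl
      · rfl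
      · rfl
      · exact absurd h' (by simp)
    subst hl'
    rw [ycoal_quad y hyp hyq, wt, Fin.coe_castSucc]
    have : 0 ≤ K := le_of_lt hK0
    nlinarith

end C1

/-- The allocation `y` with `y(r) = 1` and
`y(p_i^{(l)}) = y(q_i^{(l)}) = l·K` is the nucleolus of the packing game `(P, v)`:
it is efficient, and its sorted excess vector is lexicographically maximal among all
efficient allocations. -/
theorem stmt16 (n : ℕ) (ε K : ℝ) (hε : 0 < ε) (hK : 2 ^ n * ε ≤ K)
    (y : Player n → ℝ)
    (hyr : y Player.r = 1)
    (hyp : ∀ (l : Fin (n + 2)) (i : Fin 4), y (Player.p l i) = ((l.1 : ℝ) + 1) * K)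
    (hyq : ∀ (l : Fin (n + 2)) (i : Fin 4), y (Player.q l i) = ((l.1 : ℝ) + 1) * K) :
    (∑ p, y p) = packV n K 1 Finset.univ ∧
    ∀ z : Player n → ℝ, (∑ p, z p) = packV n K 1 Finset.univ →
      lexLE (excessList n (packV n K 1) z) (excessList n (packV n K 1) y) := by
  classical
  have hK0 : 0 < K := lt_of_lt_of_le (by positivity) hK
  have heff : (∑ x, y x) = packV n K 1 Finset.univ := (v_univ hK0 y hyr hyp hyq).symm
  refine ⟨heff, ?_⟩
  intro z hz
  set U : Multiset (Finset (Player n)) := (Finset.univ : Finset (Player n)).powerset.val with hUdef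
  have hUmem : ∀ S : Finset (Player n), S ∈ U := by
    intro S
    rw [hUdef]
    exact Finset.mem_powerset.mpr (Finset.subset_univ S)
  set f : Finset (Player n) → ℝ := fun S => (∑ x ∈ S, z x) - packV n K 1 S with hfdef
  set g : Finset (Player n) → ℝ := fun S => (∑ x ∈ S, y x) - packV n K 1 S with hgdef
  have hgnn : ∀ S : Finset (Player n), 0 ≤ g S := by
    intro S
    have := v_le_y hK0 y hyr hyp hyq S
    rw [hgdef]
    dsimp only
    linarith
  have hEz : excessList n (packV n K 1) z = (U.map f).sort (· ≤ ·) := rfl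
  have hEy : excessList n (packV n K 1) y = (U.map g).sort (· ≤ ·) := rfl
  by_cases hcore : ∀ S : Finset (Player n), 0 ≤ f S
  · -- core case
    -- tightness
    have hfr : 0 ≤ z Player.r - 1 := by
      have := hcore {Player.r}
      rw [hfdef] at this
      simpa [v_r] using this
    have hfpair : ∀ (l : Fin (n+2)) (i : Fin 4),
        0 ≤ (z (Player.p l i) + z (Player.q l i)) - 2 * ((l.1:ℝ)+1) * K := by
      intro l i
      have := hcore {Player.p l i, Player.q l i}
      rw [hfdef] at this
      dsimp only at this
      rw [Finset.sum_pair (by simp), v_pair hK0] at this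
      exact this
    have hsame : ∑ x, z x = ∑ x, y x := hz.trans heff.symm
    rw [sum_player z, sum_player y] at hsame
    have hceq : ∀ v : Fin (n+2) × Fin 4,
        y (Player.p v.1 v.2) + y (Player.q v.1 v.2) = 2 * ((v.1.1:ℝ)+1) * K := by
      intro v; rw [hyp, hyq]; ring
    have hsumc : ∑ v : Fin (n+2) × Fin 4,
        ((z (Player.p v.1 v.2) + z (Player.q v.1 v.2)) - (y (Player.p v.1 v.2) + y (Player.q v.1 v.2)))
        = -(z Player.r - 1) := by
      rw [Finset.sum_sub_distrib, Finset.sum_add_distrib, Finset.sum_add_distrib, hyr] at *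
      linarith
    have hcnn : ∀ v : Fin (n+2) × Fin 4,
        0 ≤ (z (Player.p v.1 v.2) + z (Player.q v.1 v.2)) - (y (Player.p v.1 v.2) + y (Player.q v.1 v.2)) := by
      intro v
      rw [hceq v]
      exact hfpair v.1 v.2
    have hrz : z Player.r = 1 := by
      have h1 : 0 ≤ ∑ v : Fin (n+2) × Fin 4,
          ((z (Player.p v.1 v.2) + z (Player.q v.1 v.2)) - (y (Player.p v.1 v.2) + y (Player.q v.1 v.2))) :=
        Finset.sum_nonneg (fun v _ => hcnn v)
      rw [hsumc] at h1
      linarith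
    have hczero : ∀ v : Fin (n+2) × Fin 4,
        z (Player.p v.1 v.2) + z (Player.q v.1 v.2) = y (Player.p v.1 v.2) + y (Player.q v.1 v.2) := by
      have h0 : ∑ v : Fin (n+2) × Fin 4,
          ((z (Player.p v.1 v.2) + z (Player.q v.1 v.2)) - (y (Player.p v.1 v.2) + y (Player.q v.1 v.2))) = 0 := by
        rw [hsumc, hrz]; ring
      have := (Finset.sum_eq_zero_iff_of_nonneg (fun v _ => hcnn v)).mp h0
      intro v
      have hv := this v (Finset.mem_univ v)
      linarith
    set φ : Player n → ℝ := fun x => z x - y x with hφdef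
    have hφr : φ Player.r = 0 := by rw [hφdef]; dsimp only; rw [hrz, hyr]; ring
    have hφpq : ∀ (l : Fin (n+2)) (i : Fin 4), φ (Player.p l i) + φ (Player.q l i) = 0 := by
      intro l i
      rw [hφdef]; dsimp only
      have := hczero (l, i)
      dsimp at this
      linarith
    by_cases hd : ∀ (l : Fin (n+2)) (i : Fin 4), z (Player.q l i) = y (Player.q l i)
    · -- z = y
      left
      have hzy : z = y := by
        funext x
        cases x with
        | r => rw [hrz, hyr]
        | q l i => exact hd l i
        | p l i =>
          have h1 := hczero (l, i)
          dsimp at h1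
          have h2 := hd l i
          linarith
      rw [hzy]
    · -- z ≠ y : find minimal level
      right
      push_neg at hd
      set D : Finset (Fin (n+2)) :=
        Finset.univ.filter (fun l => ¬ ∀ i, z (Player.q l i) = y (Player.q l i)) with hDdef
      have hDne : D.Nonempty := by
        obtain ⟨l, i, hli⟩ := hd
        exact ⟨l, by simp [hDdef]; exact ⟨i, hli⟩⟩
      set l0 := D.min' hDne with hl0def
      have hl0D : l0 ∈ D := D.min'_mem hDne
      have hl0 : ∃ i, z (Player.q l0 i) ≠ y (Player.q l0 i) := by
        have := Finset.mem_filter.mp hl0D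
        push_neg at this
        exact this.2
      have hbelow : ∀ l' : Fin (n+2), l' < l0 → ∀ i, φ (Player.q l' i) = 0 := by
        intro l' hl' i
        by_contra hne
        have : l' ∈ D := by
          simp only [hDdef, Finset.mem_filter, Finset.mem_univ, true_and]
          intro hall
          apply hne
          rw [hφdef]; dsimp only; rw [hall i]; ring
        exact absurd (D.min'_le l' this) (not_le.mpr hl')
      set β : ℝ := ((l0.1:ℝ)+1) * K with hβdef
      -- pairedness for low-excess sets
      have hpaired : ∀ S : Finset (Player n), g S < β →
          ∀ (l' : Fin (n+2)) (i : Fin 4), l0 ≤ l' →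
          (Player.p l' i ∈ S ↔ Player.q l' i ∈ S) := by
        intro S hS l' i hl'
        have hββ : β ≤ ((l'.1:ℝ)+1) * K := by
          have : (l0.1:ℝ) ≤ (l'.1:ℝ) := by exact_mod_cast hl'
          rw [hβdef]
          nlinarith
        constructor
        · intro hp
          by_contra hq
          have := excess_ge_p hK0 y hyr hyp hyq l' i hp hq
          rw [hgdef] at hS; dsimp only at hS
          linarith
        · intro hq
          by_contra hp
          have := excess_ge_q hK0 y hyr hyp hyq l' i hq hp
          rw [hgdef] at hS; dsimp only at hS
          linarith
      -- low-excess sets have equal z and y sums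
      have hloweq : ∀ S : Finset (Player n), g S < β → f S = g S := by
        intro S hS
        have hzero : ∑ x ∈ S, φ x = 0 := by
          rw [← Finset.sum_filter_ne_zero S (f := φ)]
          set S' := S.filter (fun x => φ x ≠ 0) with hS'def
          have hmemS' : ∀ x, x ∈ S' ↔ (x ∈ S ∧ φ x ≠ 0) := by
            intro x; simp [hS'def]
          set gsw : Player n → Player n := fun x => match x with
            | Player.r => Player.r
            | Player.p l i => Player.q l i
            | Player.q l i => Player.p l i with hgsw
          have hlev : ∀ (l' : Fin (n+2)) (i : Fin 4), φ (Player.q l' i) ≠ 0 → l0 ≤ l' := by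
            intro l' i hne
            by_contra hlt
            exact hne (hbelow l' (not_le.mp hlt) i)
          apply Finset.sum_involution (fun x _ => gsw x)
          · intro a ha
            cases a with
            | r => rw [hgsw]; dsimp only; rw [hφr]; ring
            | p l i => exact hφpq l i
            | q l i => have := hφpq l i; rw [hgsw]; dsimp only; linarith
          · intro a ha hne
            cases a with
            | r => exact absurd hφr ((hmemS' _).mp ha).2
            | p l i => rw [hgsw]; simp
            | q l i => rw [hgsw]; simp
          · intro a ha
            rcases (hmemS' a).mp ha with ⟨haS, haφ⟩
            cases a with
            | r => exact absurd hφr haφ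
            | p l i =>
              have hqφ : φ (Player.q l i) ≠ 0 := by
                have := hφpq l i
                intro h0
                exact haφ (by linarith)
              have hl0le : l0 ≤ l := hlev l i hqφ
              have hqS : Player.q l i ∈ S := (hpaired S hS l i hl0le).mp haS
              exact (hmemS' _).mpr ⟨hqS, hqφ⟩
            | q l i =>
              have hpφ : φ (Player.p l i) ≠ 0 := by
                have := hφpq l i
                intro h0
                exact haφ (by linarith)
              have hl0le : l0 ≤ l := hlev l i haφ
              have hpS : Player.p l i ∈ S := (hpaired S hS l i hl0le).mpr haS
              exact (hmemS' _).mpr ⟨hpS, hpφ⟩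
          · intro a ha
            cases a with
            | r => rfl
            | p l i => rfl
            | q l i => rfl
        have : ∑ x ∈ S, z x - ∑ x ∈ S, y x = 0 := by
          rw [← Finset.sum_sub_distrib]
          exact hzero
        rw [hfdef, hgdef]; dsimp only
        linarith
      -- the witness set
      obtain ⟨i0, hi0⟩ := hl0
      have hwitness : ∃ Sw : Finset (Player n), f Sw < β ∧ ¬ (g Sw < β) := by
        rcases lt_or_gt_of_ne (sub_ne_zero.mpr hi0) with hneg | hpos
        · refine ⟨{Player.q l0 i0}, ?_, ?_⟩
          · rw [hfdef]; dsimp only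
            rw [Finset.sum_singleton, v_single_q]
            have := hyq l0 i0
            rw [hβdef]
            linarith
          · rw [hgdef]; dsimp only
            rw [Finset.sum_singleton, v_single_q, hyq, hβdef]
            simp
        · refine ⟨{Player.p l0 i0}, ?_, ?_⟩
          · rw [hfdef]; dsimp only
            rw [Finset.sum_singleton, v_single_p]
            have h1 := hczero (l0, i0)
            dsimp at h1
            have h2 := hyp l0 i0
            have h3 := hyq l0 i0
            rw [hβdef]
            linarith
          · rw [hgdef]; dsimp only
            rw [Finset.sum_singleton, v_single_p, hyp, hβdef]
            simp
      obtain ⟨Sw, hSwf, hSwg⟩ := hwitness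
      -- split U
      rw [hEz, hEy]
      have hsplit : U = U.filter (fun S => g S < β) + U.filter (fun S => ¬ (g S < β)) :=
        (Multiset.filter_add_not _ _).symm
      have hCeq : (U.filter (fun S => g S < β)).map f = (U.filter (fun S => g S < β)).map g := by
        apply Multiset.map_congr rfl
        intro S hS
        exact hloweq S (Multiset.mem_filter.mp hS).2
      rw [hsplit, Multiset.map_add, Multiset.map_add, hCeq]
      apply lexKey _ _ _ (by rw [Multiset.card_map, Multiset.card_map]) β
      · refine ⟨f Sw, Multiset.mem_map_of_mem f ?_, hSwf⟩
        exact Multiset.mem_filter.mpr ⟨hUmem Sw, hSwg⟩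
      · intro b hb
        obtain ⟨S, hS, rfl⟩ := Multiset.mem_map.mp hb
        exact not_lt.mp (Multiset.mem_filter.mp hS).2
  · -- non-core case
    right
    push_neg at hcore
    obtain ⟨S0, hS0⟩ := hcore
    rw [hEz, hEy]
    have h0 : (U.map f) = 0 + (U.map f) := (zero_add _).symm
    have h1 : (U.map g) = 0 + (U.map g) := (zero_add _).symm
    rw [h0, h1]
    apply lexKey _ _ _ (by rw [Multiset.card_map, Multiset.card_map]) 0
    · exact ⟨f S0, Multiset.mem_map_of_mem f (hUmem S0), hS0⟩
    · intro b hb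
      obtain ⟨S, hS, rfl⟩ := Multiset.mem_map.mp hb
      exact hgnn S
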